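/- Let (μ_Δ)_{Δ∈ℕ} be a family of probability measures on ℕ*, each with full support (μ_Δ(i) > 0 for all i ≥ 1 and ∑_{i≥1} μ_Δ(i) = 1). Suppose that for every Δ ∈ ℕ and every v ∈ ℕ*: μ0(Δ+1)·μ0(1)·μ_Δ(v)² = μ0(v)·μ0(Δ+v)·μ_Δ(1)². Then for every Δ ∈ ℕ, the series ∑_{s≥1} √(μ0(s)·μ0(s+Δ)) converges and for every v ∈ ℕ*: μ_Δ(v) = √(μ0(v)·μ0(v+Δ)) / ∑_{s≥1} √(μ0(s)·μ0(s+Δ)). -/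

import Mathlib

open scoped BigOperators

/-- If a family `(μ_Δ)` of full-support probabilities on `ℕ*` satisfies
`μ0(Δ+1)·μ0(1)·μ_Δ(v)² = μ0(v)·μ0(Δ+v)·μ_Δ(1)²` for all `Δ` and `v ≥ 1`,
then each `μ_Δ` is given by the Cond-int formula
`μ_Δ(v) = √(μ0(v)·μ0(v+Δ)) / ∑_{s≥1} √(μ0(s)·μ0(s+Δ))`, the series converging. -/
theorem stmt_7 (μ : ℕ → ℕ → ℝ) (h0 : ∀ Δ, μ Δ 0 = 0)
    (hpos : ∀ Δ i, 1 ≤ i → 0 < μ Δ i)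
    (hsum : ∀ Δ, HasSum (fun i : ℕ => μ Δ (i + 1)) 1)
    (heq : ∀ Δ : ℕ, ∀ v : ℕ, 1 ≤ v →
      μ 0 (Δ + 1) * μ 0 1 * (μ Δ v) ^ 2 = μ 0 v * μ 0 (Δ + v) * (μ Δ 1) ^ 2) :
    ∀ Δ : ℕ,
      Summable (fun s : ℕ => Real.sqrt (μ 0 (s + 1) * μ 0 (s + 1 + Δ))) ∧
      ∀ v : ℕ, 1 ≤ v →
        μ Δ v = Real.sqrt (μ 0 v * μ 0 (v + Δ)) /
          ∑' s : ℕ, Real.sqrt (μ 0 (s + 1) * μ 0 (s + 1 + Δ)) := by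
  intro Δ
  have ha : 0 < Real.sqrt (μ 0 (Δ + 1) * μ 0 1) :=
    Real.sqrt_pos.mpr (mul_pos (hpos 0 (Δ + 1) (by omega)) (hpos 0 1 le_rfl))
  set a := Real.sqrt (μ 0 (Δ + 1) * μ 0 1) with ha_def
  have hk : 0 < μ Δ 1 / a := div_pos (hpos Δ 1 le_rfl) ha
  set k := μ Δ 1 / a with hk_def
  -- key identity
  have key : ∀ v : ℕ, 1 ≤ v → μ Δ v = k * Real.sqrt (μ 0 v * μ 0 (v + Δ)) := by
    intro v hv
    have h1 : a * μ Δ v = Real.sqrt (μ 0 (Δ + 1) * μ 0 1 * (μ Δ v) ^ 2) := by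
      rw [Real.sqrt_mul (le_of_lt (mul_pos (hpos 0 (Δ + 1) (by omega)) (hpos 0 1 le_rfl))),
        Real.sqrt_sq (le_of_lt (hpos Δ v hv))]
    have h2 : Real.sqrt (μ 0 v * μ 0 (Δ + v) * (μ Δ 1) ^ 2)
        = Real.sqrt (μ 0 v * μ 0 (v + Δ)) * μ Δ 1 := by
      rw [Real.sqrt_mul (le_of_lt (mul_pos (hpos 0 v hv) (hpos 0 (Δ + v) (by omega)))),
        Real.sqrt_sq (le_of_lt (hpos Δ 1 le_rfl)), add_comm Δ v]
    have h3 : a * μ Δ v = Real.sqrt (μ 0 v * μ 0 (v + Δ)) * μ Δ 1 := by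
      rw [h1, heq Δ v hv, h2]
    rw [hk_def]
    field_simp
    linarith [h3]
  have hsqrt : (fun s : ℕ => Real.sqrt (μ 0 (s + 1) * μ 0 (s + 1 + Δ)))
      = fun s : ℕ => μ Δ (s + 1) / k := by
    funext s
    rw [key (s + 1) (by omega)]
    field_simp
  have hS : HasSum (fun s : ℕ => Real.sqrt (μ 0 (s + 1) * μ 0 (s + 1 + Δ))) (1 / k) := by
    rw [hsqrt]
    simpa using (hsum Δ).div_const k
  refine ⟨hS.summable, fun v hv => ?_⟩
  rw [hS.tsum_eq, key v hv]
  field_simp
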